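/- Let F be a field of characteristic ≠ p containing a primitive p-th root of unity (with √−1 ∈ F if p = 2), E = F(∜[p^∞]{F}), and θ : Gal(E/F) → 1 + pℤₚ the cyclotomic character. Then for every σ ∈ Gal(E/F) and every τ ∈ Gal(E/F(μ_{p^∞})), one has στσ⁻¹ = τ^{θ(σ)}; that is, conjugation by σ acts on the abelian normal subgroup Gal(E/F(μ_{p^∞})) by exponentiation by θ(σ). -/

import Mathlib

open IntermediateField

theorem stmt19 (p : ℕ) [Fact p.Prime] (F : Type*) [Field F]
    (hchar : (p : F) ≠ 0)
    (hroot : ∃ ζ : F, IsPrimitiveRoot ζ p)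
    (hsqrt : p = 2 → ∃ i : F, i ^ 2 = -1)
    (E : IntermediateField F (AlgebraicClosure F))
    (hE : E = IntermediateField.adjoin F
      {x : AlgebraicClosure F | ∃ (n : ℕ) (a : F),
        x ^ (p ^ n) = algebraMap F (AlgebraicClosure F) a})
    (σ τ : E ≃ₐ[F] E)
    -- τ lies in Gal(E/F(μ_{p^∞})): it fixes all p-power roots of unity
    (hτ : ∀ ζ : E, (∃ m : ℕ, ζ ^ (p ^ m) = 1) → τ ζ = ζ)
    -- t n is an integer representing the cyclotomic character θ(σ) modulo p^n
    (t : ℕ → ℤ)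
    (ht : ∀ (ζ : E) (n : ℕ), ζ ^ (p ^ n) = 1 → σ ζ = ζ ^ (t n)) :
    -- conjugation by σ acts on Gal(E/F(μ_{p^∞})) by exponentiation by θ(σ):
    -- on each p^n-th root x of an element of F, writing τ x = ω • x, we have
    -- (σ τ σ⁻¹) x = ω^{θ(σ)} x
    ∀ (x : E) (n : ℕ) (a : F), x ≠ 0 → x ^ (p ^ n) = algebraMap F E a →
      σ (τ (σ⁻¹ x)) = (τ x / x) ^ (t n) * x := by
  intro x n a hx hxa
  have hσinv : ∀ z : E, σ⁻¹ z = σ.symm z := fun z => rfl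
  set ω := τ x / x with hω
  have hxpn : x ^ (p ^ n) ≠ 0 := pow_ne_zero _ hx
  have halg : algebraMap F E a ≠ 0 := hxa ▸ hxpn
  have hωpow : ω ^ (p ^ n) = 1 := by
    rw [hω, div_pow, ← map_pow, hxa, AlgEquiv.commutes, div_self halg]
  have hyne : σ.symm x ≠ 0 := fun h => hx (by rw [← σ.apply_symm_apply x, h, map_zero])
  have hy : (σ.symm x) ^ (p ^ n) = algebraMap F E a := by
    rw [← map_pow, hxa, AlgEquiv.commutes]
  have hratio : (x / σ.symm x) ^ (p ^ n) = 1 := by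
    rw [div_pow, hxa, hy, div_self halg]
  have h1 : τ (x / σ.symm x) = x / σ.symm x := hτ _ ⟨n, hratio⟩
  have hτx : τ x ≠ 0 := fun h => hx (by simpa using τ.injective (h.trans (map_zero τ).symm))
  have hτy : τ (σ.symm x) = ω * σ.symm x := by
    rw [map_div₀] at h1
    have hτyne : τ (σ.symm x) ≠ 0 := fun h =>
      hyne (τ.injective (h.trans (map_zero τ).symm))
    field_simp [hω] at h1 ⊢
    linear_combination (-x⁻¹) * h1 - τ (σ.symm x) * mul_inv_cancel₀ hx
  rw [hσinv, hτy, map_mul, σ.apply_symm_apply, ht ω n hωpow]
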